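/- Let (f_n) be a sequence of concave differentiable functions from an open convex subset U of ℝ^m to ℝ converging pointwise to a function f, and suppose f is differentiable at a point x ∈ U. Then ∇f_n(x) → ∇f(x). -/

import Mathlib

open Filter Topology

/-- Gradient inequality for concave functions: the tangent line lies above the graph. -/
lemma concave_le_add_fderiv {E : Type*} [NormedAddCommGroup E] [NormedSpace ℝ E]
    {U : Set E} {f : E → ℝ} (hc : ConcaveOn ℝ U f)
    {x y : E} (hx : x ∈ U) (hy : y ∈ U) (hf : DifferentiableAt ℝ f x) :
    f y ≤ f x + fderiv ℝ f x (y - x) := by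
  have hl : HasLineDerivAt ℝ f (fderiv ℝ f x (y - x)) x (y - x) :=
    hf.hasFDerivAt.hasLineDerivAt _
  have htend := hl.tendsto_slope_zero_right
  have hev : ∀ᶠ t : ℝ in 𝓝[>] (0 : ℝ),
      f y - f x ≤ t⁻¹ • (f (x + t • (y - x)) - f x) := by
    filter_upwards [Ioc_mem_nhdsGT_of_mem (by constructor <;> norm_num :
        (0 : ℝ) ∈ Set.Ico (0 : ℝ) 1)] with t ht
    have ht0 : (0 : ℝ) < t := ht.1
    have ht1 : t ≤ 1 := ht.2
    have hcc := hc.2 hx hy (show (0:ℝ) ≤ 1 - t by linarith) (le_of_lt ht0) (by ring)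
    have heq : (1 - t) • x + t • y = x + t • (y - x) := by
      rw [smul_sub, sub_smul, one_smul]; abel
    rw [heq] at hcc
    simp only [smul_eq_mul] at hcc
    have : t * (f y - f x) ≤ f (x + t • (y - x)) - f x := by nlinarith [hcc]
    rw [smul_eq_mul, ← div_eq_inv_mul, le_div_iff₀ ht0]
    linarith [this]
  have := ge_of_tendsto htend hev
  linarith

set_option maxHeartbeats 1000000 in
/-- Griffiths' lemma: if concave differentiable `f_n : U → ℝ` converge
pointwise on the open convex set `U ⊆ ℝ^m` to `f`, and `f` is differentiable at `x ∈ U`,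
then `∇f_n(x) → ∇f(x)`. -/
theorem stmt_5 (m : ℕ) (U : Set (EuclideanSpace ℝ (Fin m)))
    (hUopen : IsOpen U) (hUconv : Convex ℝ U)
    (f : ℕ → EuclideanSpace ℝ (Fin m) → ℝ) (g : EuclideanSpace ℝ (Fin m) → ℝ)
    (hconc : ∀ n, ConcaveOn ℝ U (f n))
    (hdiff : ∀ n, DifferentiableOn ℝ (f n) U)
    (hptwise : ∀ x ∈ U, Tendsto (fun n => f n x) atTop (𝓝 (g x)))
    (x : EuclideanSpace ℝ (Fin m)) (hx : x ∈ U)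
    (hgx : DifferentiableAt ℝ g x) :
    Tendsto (fun n => gradient (f n) x) atTop (𝓝 (gradient g x)) := by
  have hDn : ∀ n, DifferentiableAt ℝ (f n) x := fun n =>
    (hdiff n).differentiableAt (hUopen.mem_nhds hx)
  -- Step 1: directional derivatives converge
  have key : ∀ v : EuclideanSpace ℝ (Fin m),
      Tendsto (fun n => fderiv ℝ (f n) x v) atTop (𝓝 (fderiv ℝ g x v)) := by
    intro v
    rw [Metric.tendsto_atTop]
    intro ε hε
    -- directional derivatives of g via line derivatives
    have hgl1 := (hgx.hasFDerivAt.hasLineDerivAt v).tendsto_slope_zero_right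
    have hgl2 := (hgx.hasFDerivAt.hasLineDerivAt (-v)).tendsto_slope_zero_right
    -- membership of x ± t v in U eventually
    have hmem1 : ∀ᶠ t : ℝ in 𝓝[>] (0:ℝ), x + t • v ∈ U := by
      have hcont : Continuous fun t : ℝ => x + t • v := by continuity
      have : Tendsto (fun t : ℝ => x + t • v) (𝓝 0) (𝓝 x) := by
        simpa using hcont.tendsto 0
      exact nhdsWithin_le_nhds (this.eventually (hUopen.mem_nhds hx))
    have hmem2 : ∀ᶠ t : ℝ in 𝓝[>] (0:ℝ), x + t • (-v) ∈ U := by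
      have hcont : Continuous fun t : ℝ => x + t • (-v) := by continuity
      have : Tendsto (fun t : ℝ => x + t • (-v)) (𝓝 0) (𝓝 x) := by
        simpa using hcont.tendsto 0
      exact nhdsWithin_le_nhds (this.eventually (hUopen.mem_nhds hx))
    have hq1 : ∀ᶠ t : ℝ in 𝓝[>] (0:ℝ),
        |t⁻¹ • (g (x + t • v) - g x) - fderiv ℝ g x v| < ε / 4 := by
      have := hgl1.eventually (eventually_abs_sub_lt (fderiv ℝ g x v) (by linarith : (0:ℝ) < ε/4))
      simpa [abs_sub_comm] using this
    have hq2 : ∀ᶠ t : ℝ in 𝓝[>] (0:ℝ),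
        |t⁻¹ • (g (x + t • (-v)) - g x) - fderiv ℝ g x (-v)| < ε / 4 := by
      have := hgl2.eventually
        (eventually_abs_sub_lt (fderiv ℝ g x (-v)) (by linarith : (0:ℝ) < ε/4))
      simpa [abs_sub_comm] using this
    have hpos : ∀ᶠ t : ℝ in 𝓝[>] (0:ℝ), (0:ℝ) < t := self_mem_nhdsWithin
    obtain ⟨t, h1, h2, hmemp, hmemm, ht0⟩ :=
      (hq1.and (hq2.and (hmem1.and (hmem2.and hpos)))).exists
    set yp := x + t • v with hyp
    set ym := x + t • (-v) with hym
    set A := t⁻¹ • (g yp - g x) with hA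
    set B := t⁻¹ • (g ym - g x) with hB
    -- pointwise convergence of the difference quotients
    have hquotp : Tendsto (fun n => t⁻¹ * (f n yp - f n x)) atTop (𝓝 A) := by
      have := ((hptwise yp hmemp).sub (hptwise x hx)).const_mul t⁻¹
      simpa [hA, smul_eq_mul] using this
    have hquotm : Tendsto (fun n => t⁻¹ * (f n ym - f n x)) atTop (𝓝 B) := by
      have := ((hptwise ym hmemm).sub (hptwise x hx)).const_mul t⁻¹
      simpa [hB, smul_eq_mul] using this
    have hevp := hquotp.eventually (eventually_abs_sub_lt A (by linarith : (0:ℝ) < ε/4))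
    have hevm := hquotm.eventually (eventually_abs_sub_lt B (by linarith : (0:ℝ) < ε/4))
    obtain ⟨N, hN⟩ := (hevp.and hevm).exists_forall_of_atTop
    refine ⟨N, fun n hn => ?_⟩
    obtain ⟨hp, hm⟩ := hN n hn
    -- concavity sandwich
    have hub : f n yp ≤ f n x + t * fderiv ℝ (f n) x v := by
      have := concave_le_add_fderiv (hconc n) hx hmemp (hDn n)
      have heq : yp - x = t • v := by rw [hyp]; abel
      rw [heq] at this
      simpa [smul_eq_mul] using this
    have hlb : f n ym ≤ f n x - t * fderiv ℝ (f n) x v := by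
      have := concave_le_add_fderiv (hconc n) hx hmemm (hDn n)
      have heq : ym - x = t • (-v) := by rw [hym]; abel
      rw [heq] at this
      have hmap : (fderiv ℝ (f n) x) (t • (-v)) = -(t * fderiv ℝ (f n) x v) := by
        rw [map_smul, map_neg, smul_neg, smul_eq_mul]
      rw [hmap] at this
      linarith
    -- combine
    have hDglb : t⁻¹ * (f n yp - f n x) ≤ fderiv ℝ (f n) x v := by
      rw [← div_eq_inv_mul, div_le_iff₀ ht0]
      nlinarith [hub]
    have hDgub : fderiv ℝ (f n) x v ≤ -(t⁻¹ * (f n ym - f n x)) := by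
      have h' : t⁻¹ * (f n ym - f n x) ≤ -(fderiv ℝ (f n) x v) := by
        rw [← div_eq_inv_mul, div_le_iff₀ ht0]
        nlinarith [hlb]
      linarith
    have hmapneg : fderiv ℝ g x (-v) = -(fderiv ℝ g x v) := map_neg _ _
    rw [hmapneg] at h2
    rw [Real.dist_eq, abs_sub_lt_iff]
    rw [abs_sub_lt_iff] at hp hm h1 h2
    rw [hA, smul_eq_mul] at h1 hp
    rw [hB, smul_eq_mul] at h2 hm
    constructor <;> linarith
  -- Step 2: from directional derivatives to gradients
  have hgrad_coord : ∀ (h : EuclideanSpace ℝ (Fin m) → ℝ) (i : Fin m),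
      gradient h x i = fderiv ℝ h x (EuclideanSpace.single i (1:ℝ)) := by
    intro h i
    have h1 : (inner ℝ (gradient h x) (EuclideanSpace.single i (1:ℝ)) : ℝ)
        = fderiv ℝ h x (EuclideanSpace.single i (1:ℝ)) := by
      simp only [gradient]
      exact InnerProductSpace.toDual_symm_apply
    rw [EuclideanSpace.inner_single_right] at h1
    simpa using h1
  have hcoord : ∀ i, Tendsto (fun n => gradient (f n) x i) atTop (𝓝 (gradient g x i)) := by
    intro i
    simp only [hgrad_coord]
    exact key _
  have hpi : Tendsto (fun n => (fun i => gradient (f n) x i : Fin m → ℝ)) atTop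
      (𝓝 (fun i => gradient g x i)) := tendsto_pi_nhds.2 hcoord
  exact ((PiLp.continuousLinearEquiv 2 ℝ (fun _ : Fin m => ℝ)).symm.continuous.tendsto
    _).comp hpi
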